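/- arXiv:2503.18953 — 6 statements merged into one kernel-verified Lean document; each statement's English description precedes it below -/
import Mathlib

section
/- Let E_1 ≤ ... ≤ E_N be real numbers and β₁ ≥ β₂. Then for every k with 1 ≤ k ≤ N, ∑_{i=1}^k exp(-β₁ E_i)/Z(β₁) ≥ ∑_{i=1}^k exp(-β₂ E_i)/Z(β₂), with equality when k = N. That is, the Gibbs probability vector at inverse temperature β₁ majorizes the one at β₂. -/
theorem gibbs_majorization (N : ℕ) (hN : 1 ≤ N) (E : ℕ → ℝ)
    (hE : ∀ i j, i ≤ j → j < N → E i ≤ E j) (β₁ β₂ : ℝ) (h : β₁ ≥ β₂) :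
    (∀ k, 1 ≤ k → k ≤ N →
      (∑ i ∈ Finset.range k, Real.exp (-β₁ * E i)) /
        (∑ i ∈ Finset.range N, Real.exp (-β₁ * E i)) ≥
      (∑ i ∈ Finset.range k, Real.exp (-β₂ * E i)) /
        (∑ i ∈ Finset.range N, Real.exp (-β₂ * E i))) ∧
    (∑ i ∈ Finset.range N, Real.exp (-β₁ * E i)) /
        (∑ i ∈ Finset.range N, Real.exp (-β₁ * E i)) =
      (∑ i ∈ Finset.range N, Real.exp (-β₂ * E i)) /
        (∑ i ∈ Finset.range N, Real.exp (-β₂ * E i)) := by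
  have hZ : ∀ β : ℝ, 0 < ∑ i ∈ Finset.range N, Real.exp (-β * E i) := by
    intro β
    apply Finset.sum_pos (fun i _ => Real.exp_pos _)
    exact Finset.nonempty_range_iff.mpr (Nat.one_le_iff_ne_zero.mp hN)
  constructor
  · intro k hk1 hkN
    rw [ge_iff_le, div_le_div_iff₀ (hZ β₂) (hZ β₁)]
    have expand : ∀ a b : ℝ, ∀ m : ℕ,
        (∑ i ∈ Finset.range k, Real.exp (-a * E i)) *
          (∑ j ∈ Finset.range m, Real.exp (-b * E j)) =
        ∑ i ∈ Finset.range k, ∑ j ∈ Finset.range m,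
          Real.exp (-a * E i) * Real.exp (-b * E j) := by
      intro a b m
      rw [Finset.sum_mul_sum]
    have hsplit : ∀ f : ℕ → ℝ, ∑ j ∈ Finset.range N, f j =
        ∑ j ∈ Finset.range k, f j + ∑ j ∈ Finset.Ico k N, f j := by
      intro f
      exact (Finset.sum_range_add_sum_Ico f hkN).symm
    rw [expand, expand]
    simp only [hsplit, Finset.sum_add_distrib]
    have heq : (∑ i ∈ Finset.range k, ∑ j ∈ Finset.range k,
          Real.exp (-β₂ * E i) * Real.exp (-β₁ * E j)) =
        ∑ i ∈ Finset.range k, ∑ j ∈ Finset.range k,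
          Real.exp (-β₁ * E i) * Real.exp (-β₂ * E j) := by
      rw [Finset.sum_comm]
      simp_rw [mul_comm]
    rw [heq]
    refine add_le_add_right (Finset.sum_le_sum fun i hi => Finset.sum_le_sum fun j hj => ?_) _
    rw [← Real.exp_add, ← Real.exp_add, Real.exp_le_exp]
    simp only [Finset.mem_range] at hi
    simp only [Finset.mem_Ico] at hj
    have hij : E i ≤ E j := hE i j (le_of_lt (lt_of_lt_of_le hi hj.1)) hj.2
    nlinarith [hij, h]
  · rw [div_self (ne_of_gt (hZ β₁)), div_self (ne_of_gt (hZ β₂))]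
end

section
/- Let E_1 ≤ ... ≤ E_N be real numbers, β₁ ≥ β₂, and 1 ≤ k ≤ N. Then (∑_{i=1}^k exp(-β₁ E_i)) · Z(β₂) ≥ (∑_{i=1}^k exp(-β₂ E_i)) · Z(β₁), where Z(β) = ∑_{i=1}^N exp(-β E_i). -/
theorem gibbs_majorization_cross_multiplied (N : ℕ) (E : ℕ → ℝ)
    (hE : ∀ i j, i ≤ j → j < N → E i ≤ E j) (β₁ β₂ : ℝ) (h : β₁ ≥ β₂)
    (k : ℕ) (hk1 : 1 ≤ k) (hkN : k ≤ N) :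
    (∑ i ∈ Finset.range k, Real.exp (-β₁ * E i)) *
      (∑ i ∈ Finset.range N, Real.exp (-β₂ * E i)) ≥
    (∑ i ∈ Finset.range k, Real.exp (-β₂ * E i)) *
      (∑ i ∈ Finset.range N, Real.exp (-β₁ * E i)) := by
  have hsplit : ∀ β : ℝ, (∑ i ∈ Finset.range N, Real.exp (-β * E i)) =
      (∑ i ∈ Finset.range k, Real.exp (-β * E i)) +
        ∑ i ∈ Finset.Ico k N, Real.exp (-β * E i) := by
    intro β
    rw [Finset.range_eq_Ico,
      ← Finset.sum_Ico_consecutive _ (Nat.zero_le k) hkN, Finset.range_eq_Ico]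
  have key : (∑ i ∈ Finset.range k, Real.exp (-β₂ * E i)) *
      (∑ j ∈ Finset.Ico k N, Real.exp (-β₁ * E j)) ≤
      (∑ i ∈ Finset.range k, Real.exp (-β₁ * E i)) *
      (∑ j ∈ Finset.Ico k N, Real.exp (-β₂ * E j)) := by
    rw [Finset.sum_mul_sum, Finset.sum_mul_sum]
    apply Finset.sum_le_sum
    intro i hi
    apply Finset.sum_le_sum
    intro j hj
    rw [← Real.exp_add, ← Real.exp_add]
    apply Real.exp_le_exp.mpr
    have hij : E i ≤ E j := by
      apply hE i j
      · exact le_trans (le_of_lt (Finset.mem_range.mp hi)) (Finset.mem_Ico.mp hj).1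
      · exact (Finset.mem_Ico.mp hj).2
    nlinarith [mul_nonneg (sub_nonneg.mpr h) (sub_nonneg.mpr hij)]
  rw [hsplit β₁, hsplit β₂, mul_add, mul_add]
  have := mul_comm (∑ i ∈ Finset.range k, Real.exp (-β₁ * E i))
    (∑ i ∈ Finset.range k, Real.exp (-β₂ * E i))
  linarith
end

section
/- Let x and y be probability vectors of length N (nonnegative entries summing to 1), each sorted in non-increasing order, such that x majorizes y. Then the Shannon entropy satisfies H(x) ≤ H(y), where H(p) = -∑_i p_i log p_i (with the convention 0 log 0 = 0). -/
open Finset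

/-- Pointwise convexity inequality: tangent line to `t ↦ t log t` at `y > 0`
lies below the graph, for all `x ≥ 0`. -/
lemma entropy_pointwise (x y : ℝ) (hx : 0 ≤ x) (hy : 0 < y) :
    y * Real.log y + (Real.log y + 1) * (x - y) ≤ x * Real.log x := by
  rcases eq_or_lt_of_le hx with h | h
  · rw [← h]
    simp only [zero_mul]
    nlinarith
  · have h1 : Real.log (y / x) ≤ y / x - 1 :=
      Real.log_le_sub_one_of_pos (div_pos hy h)
    rw [Real.log_div hy.ne' h.ne'] at h1
    have h2 : x * (Real.log y - Real.log x) ≤ x * (y / x - 1) :=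
      mul_le_mul_of_nonneg_left h1 h.le
    have h3 : x * (y / x - 1) = y - x := by field_simp
    nlinarith

theorem majorization_entropy_le (N : ℕ) (x y : ℕ → ℝ)
    (hx0 : ∀ i < N, 0 ≤ x i) (hy0 : ∀ i < N, 0 ≤ y i)
    (hx1 : ∑ i ∈ Finset.range N, x i = 1) (hy1 : ∑ i ∈ Finset.range N, y i = 1)
    (hxs : ∀ i j, i ≤ j → j < N → x j ≤ x i)
    (hys : ∀ i j, i ≤ j → j < N → y j ≤ y i)
    (hmaj : ∀ k ≤ N, ∑ i ∈ Finset.range k, y i ≤ ∑ i ∈ Finset.range k, x i) :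
    -(∑ i ∈ Finset.range N, x i * Real.log (x i)) ≤
    -(∑ i ∈ Finset.range N, y i * Real.log (y i)) := by
  rw [neg_le_neg_iff]
  classical
  -- find the support cutoff m of y
  obtain ⟨m, hmN, hpos, hzero⟩ :
      ∃ m ≤ N, (∀ i < m, 0 < y i) ∧ ∀ i, m ≤ i → i < N → y i = 0 := by
    by_cases h : ∃ k, k < N ∧ y k = 0
    · set m := Nat.find h with hm
      obtain ⟨hmlt, hym⟩ := Nat.find_spec h
      refine ⟨m, hmlt.le, fun i hi => ?_, fun i h1 h2 => ?_⟩
      · have := Nat.find_min h hi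
        push_neg at this
        exact lt_of_le_of_ne (hy0 i (hi.trans hmlt)) (Ne.symm (this (hi.trans hmlt)))
      · have := hys m i h1 h2
        have := hy0 i h2
        linarith
    · push_neg at h
      exact ⟨N, le_rfl, fun i hi =>
        lt_of_le_of_ne (hy0 i hi) (Ne.symm (h i hi)), fun i h1 h2 => absurd h2 (not_lt.2 h1)⟩
  -- tail sums vanish
  have hysum : ∑ i ∈ range m, y i = 1 := by
    rw [← hy1, ← Finset.sum_range_add_sum_Ico y hmN]
    have : ∑ i ∈ Finset.Ico m N, y i = 0 :=
      Finset.sum_eq_zero fun i hi => hzero i (Finset.mem_Ico.1 hi).1 (Finset.mem_Ico.1 hi).2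
    rw [this, add_zero]
  have hxsum : ∑ i ∈ range m, x i = 1 := by
    have h1 : (1 : ℝ) ≤ ∑ i ∈ range m, x i := by
      have := hmaj m hmN; rwa [hysum] at this
    have h2 : ∑ i ∈ range m, x i ≤ 1 := by
      rw [← hx1, ← Finset.sum_range_add_sum_Ico x hmN]
      have : 0 ≤ ∑ i ∈ Finset.Ico m N, x i :=
        Finset.sum_nonneg fun i hi => hx0 i (Finset.mem_Ico.1 hi).2
      linarith
    linarith
  have hxzero : ∀ i, m ≤ i → i < N → x i = 0 := by
    have htail : ∑ i ∈ Finset.Ico m N, x i = 0 := by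
      have := Finset.sum_range_add_sum_Ico x hmN
      rw [hx1, hxsum] at this
      linarith
    intro i h1 h2
    have := (Finset.sum_eq_zero_iff_of_nonneg
      (fun j hj => hx0 j (Finset.mem_Ico.1 hj).2)).1 htail i (Finset.mem_Ico.2 ⟨h1, h2⟩)
    exact this
  -- reduce the sums to `range m`
  have hxred : ∑ i ∈ range N, x i * Real.log (x i) = ∑ i ∈ range m, x i * Real.log (x i) := by
    rw [← Finset.sum_range_add_sum_Ico _ hmN]
    have : ∑ i ∈ Finset.Ico m N, x i * Real.log (x i) = 0 :=
      Finset.sum_eq_zero fun i hi => by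
        rw [hxzero i (Finset.mem_Ico.1 hi).1 (Finset.mem_Ico.1 hi).2, zero_mul]
    rw [this, add_zero]
  have hyred : ∑ i ∈ range N, y i * Real.log (y i) = ∑ i ∈ range m, y i * Real.log (y i) := by
    rw [← Finset.sum_range_add_sum_Ico _ hmN]
    have : ∑ i ∈ Finset.Ico m N, y i * Real.log (y i) = 0 :=
      Finset.sum_eq_zero fun i hi => by
        rw [hzero i (Finset.mem_Ico.1 hi).1 (Finset.mem_Ico.1 hi).2, zero_mul]
    rw [this, add_zero]
  rw [hxred, hyred]
  -- key pointwise bound summed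
  have key : ∑ i ∈ range m, (y i * Real.log (y i) + (Real.log (y i) + 1) * (x i - y i)) ≤
      ∑ i ∈ range m, x i * Real.log (x i) :=
    Finset.sum_le_sum fun i hi =>
      entropy_pointwise (x i) (y i) (hx0 i ((Finset.mem_range.1 hi).trans_le hmN))
        (hpos i (Finset.mem_range.1 hi))
  rw [Finset.sum_add_distrib] at key
  -- Abel summation: the correction term is nonnegative
  have habel : 0 ≤ ∑ i ∈ range m, (Real.log (y i) + 1) * (x i - y i) := by
    rcases Nat.eq_zero_or_pos m with hm0 | hm0
    · simp [hm0]
    · have hparts := Finset.sum_range_by_parts (fun i => Real.log (y i) + 1)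
        (fun i => x i - y i) m
      simp only [smul_eq_mul] at hparts
      have hDm : ∑ i ∈ range m, (x i - y i) = 0 := by
        rw [Finset.sum_sub_distrib, hxsum, hysum]; ring
      rw [hparts, hDm, mul_zero, zero_sub, neg_nonneg]
      refine Finset.sum_nonpos fun i hi => ?_
      have him : i < m - 1 := Finset.mem_range.1 hi
      have hi1m : i + 1 < m := by omega
      apply mul_nonpos_of_nonpos_of_nonneg
      · have hle : Real.log (y (i + 1)) ≤ Real.log (y i) :=
          Real.log_le_log (hpos (i + 1) hi1m)
            (hys i (i + 1) (Nat.le_succ i) (hi1m.trans_le hmN))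
        linarith
      · have h1 : i + 1 ≤ N := le_trans hi1m.le hmN
        have := hmaj (i + 1) h1
        rw [Finset.sum_sub_distrib]
        linarith
  linarith
end

section
/- Let a_1,...,a_N be positive reals and t ≥ 1. Then for every k with 1 ≤ k ≤ N, (∑_{i=1}^k a_i^t)/(∑_{i=1}^N a_i^t) ≥ (∑_{i=1}^k a_i)/(∑_{i=1}^N a_i), provided a_1 ≥ a_2 ≥ ... ≥ a_N. -/
lemma pow_maj_aux (x y t : ℝ) (hy : 0 < y) (hxy : y ≤ x) (ht : 1 ≤ t) :
    x * y ^ t ≤ x ^ t * y := by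
  have hx : 0 < x := lt_of_lt_of_le hy hxy
  have h1 : y ^ (t - 1) ≤ x ^ (t - 1) :=
    Real.rpow_le_rpow hy.le hxy (by linarith)
  have hyt : y ^ t = y * y ^ (t - 1) := by
    rw [← Real.rpow_one_add' (by positivity) (by intro h; nlinarith)]
    ring_nf
  have hxt : x ^ t = x * x ^ (t - 1) := by
    rw [← Real.rpow_one_add' (by positivity) (by intro h; nlinarith)]
    ring_nf
  rw [hyt, hxt]
  have hy1 : 0 < y ^ (t - 1) := Real.rpow_pos_of_pos hy _
  have h2 := mul_le_mul_of_nonneg_left h1 (by positivity : (0:ℝ) ≤ x * y)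
  nlinarith [h2]

theorem power_majorization (N : ℕ) (a : ℕ → ℝ) (ha : ∀ i < N, 0 < a i)
    (hsorted : ∀ i j, i ≤ j → j < N → a j ≤ a i) (t : ℝ) (ht : 1 ≤ t)
    (k : ℕ) (hk1 : 1 ≤ k) (hkN : k ≤ N) :
    (∑ i ∈ Finset.range k, a i ^ t) / (∑ i ∈ Finset.range N, a i ^ t) ≥
    (∑ i ∈ Finset.range k, a i) / (∑ i ∈ Finset.range N, a i) := by
  have hN0 : 0 < N := lt_of_lt_of_le hk1 hkN
  have hposA : 0 < ∑ i ∈ Finset.range N, a i :=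
    Finset.sum_pos (fun i hi => ha i (Finset.mem_range.mp hi))
      ⟨0, Finset.mem_range.mpr hN0⟩
  have hposAt : 0 < ∑ i ∈ Finset.range N, a i ^ t :=
    Finset.sum_pos (fun i hi => Real.rpow_pos_of_pos (ha i (Finset.mem_range.mp hi)) t)
      ⟨0, Finset.mem_range.mpr hN0⟩
  rw [ge_iff_le, div_le_div_iff₀ hposA hposAt]
  have hsplit : ∀ f : ℕ → ℝ, ∑ i ∈ Finset.range N, f i =
      (∑ i ∈ Finset.range k, f i) + ∑ i ∈ Finset.Ico k N, f i := by
    intro f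
    simp only [Finset.range_eq_Ico]
    exact (Finset.sum_Ico_consecutive f (Nat.zero_le k) hkN).symm
  rw [hsplit (fun i => a i), hsplit (fun i => a i ^ t)]
  have key : (∑ i ∈ Finset.range k, a i) * (∑ j ∈ Finset.Ico k N, a j ^ t) ≤
      (∑ i ∈ Finset.range k, a i ^ t) * (∑ j ∈ Finset.Ico k N, a j) := by
    rw [Finset.sum_mul_sum, Finset.sum_mul_sum]
    apply Finset.sum_le_sum
    intro i hi
    apply Finset.sum_le_sum
    intro j hj
    obtain ⟨hkj, hjN⟩ := Finset.mem_Ico.mp hj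
    have hik : i < k := Finset.mem_range.mp hi
    exact pow_maj_aux (a i) (a j) t (ha j hjN)
      (hsorted i j (le_of_lt (lt_of_lt_of_le hik hkj)) hjN) ht
  nlinarith [key]
end

section
/- Let E_1 ≤ ... ≤ E_N and β₂ ≥ β₁ ≥ 0. The Gibbs majorization chain is transitive and consistent: if p(β) denotes the Gibbs vector at inverse temperature β, then p(β₂) majorizes p(β₁) and p(β₁) majorizes p(0), where p(0) is the uniform distribution (1/N,...,1/N). -/
noncomputable def gibbsProb (N : ℕ) (E : ℕ → ℝ) (β : ℝ) (i : ℕ) : ℝ :=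
  Real.exp (-β * E i) / (∑ j ∈ Finset.range N, Real.exp (-β * E j))

lemma gibbs_Z_pos (N : ℕ) (hN : 1 ≤ N) (E : ℕ → ℝ) (β : ℝ) :
    0 < ∑ j ∈ Finset.range N, Real.exp (-β * E j) := by
  apply Finset.sum_pos (fun j _ => Real.exp_pos _)
  exact ⟨0, Finset.mem_range.mpr hN⟩

lemma gibbs_sum_one (N : ℕ) (hN : 1 ≤ N) (E : ℕ → ℝ) (β : ℝ) :
    ∑ i ∈ Finset.range N, gibbsProb N E β i = 1 := by
  unfold gibbsProb
  rw [← Finset.sum_div, div_self (ne_of_gt (gibbs_Z_pos N hN E β))]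

lemma gibbs_partial_mono (N : ℕ) (hN : 1 ≤ N) (E : ℕ → ℝ)
    (hE : ∀ i j, i ≤ j → j < N → E i ≤ E j) (β β' : ℝ) (hb : β ≤ β')
    (k : ℕ) (hk : k ≤ N) :
    ∑ i ∈ Finset.range k, gibbsProb N E β i ≤
      ∑ i ∈ Finset.range k, gibbsProb N E β' i := by
  have hZ := gibbs_Z_pos N hN E β
  have hZ' := gibbs_Z_pos N hN E β'
  unfold gibbsProb
  rw [← Finset.sum_div, ← Finset.sum_div, div_le_div_iff₀ hZ hZ']
  rw [Finset.sum_mul, Finset.sum_mul]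
  simp_rw [Finset.mul_sum]
  have hsplit : ∀ γ δ : ℝ,
      ∑ i ∈ Finset.range k, ∑ j ∈ Finset.range N,
        Real.exp (-γ * E i) * Real.exp (-δ * E j)
      = (∑ i ∈ Finset.range k, ∑ j ∈ Finset.range k,
          Real.exp (-γ * E i) * Real.exp (-δ * E j))
        + ∑ i ∈ Finset.range k, ∑ j ∈ Finset.Ico k N,
          Real.exp (-γ * E i) * Real.exp (-δ * E j) := by
    intro γ δ
    rw [← Finset.sum_add_distrib]
    congr 1
    ext i
    rw [Finset.range_eq_Ico, Finset.range_eq_Ico]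
    exact (Finset.sum_Ico_consecutive (fun j => Real.exp (-γ * E i) * Real.exp (-δ * E j)) (Nat.zero_le k) hk).symm
  rw [hsplit, hsplit]
  have hdiag : (∑ i ∈ Finset.range k, ∑ j ∈ Finset.range k,
      Real.exp (-β * E i) * Real.exp (-β' * E j))
      = ∑ i ∈ Finset.range k, ∑ j ∈ Finset.range k,
        Real.exp (-β' * E i) * Real.exp (-β * E j) := by
    rw [Finset.sum_comm]
    congr 1; ext i; congr 1; ext j; ring
  rw [hdiag]
  apply add_le_add le_rfl
  apply Finset.sum_le_sum
  intro i hi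
  apply Finset.sum_le_sum
  intro j hj
  rw [Finset.mem_range] at hi
  rw [Finset.mem_Ico] at hj
  have hEij : E i ≤ E j := hE i j (le_trans (le_of_lt hi) hj.1) hj.2
  rw [← Real.exp_add, ← Real.exp_add, Real.exp_le_exp]
  nlinarith [mul_nonneg (sub_nonneg.mpr hb) (sub_nonneg.mpr hEij)]

theorem gibbs_majorization_chain (N : ℕ) (hN : 1 ≤ N) (E : ℕ → ℝ)
    (hE : ∀ i j, i ≤ j → j < N → E i ≤ E j) (β₁ β₂ : ℝ)
    (h1 : 0 ≤ β₁) (h2 : β₁ ≤ β₂) :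
    (∀ k ≤ N, ∑ i ∈ Finset.range k, gibbsProb N E β₁ i ≤
        ∑ i ∈ Finset.range k, gibbsProb N E β₂ i) ∧
    (∑ i ∈ Finset.range N, gibbsProb N E β₁ i =
        ∑ i ∈ Finset.range N, gibbsProb N E β₂ i) ∧
    (∀ k ≤ N, ∑ i ∈ Finset.range k, (1 : ℝ) / N ≤
        ∑ i ∈ Finset.range k, gibbsProb N E β₁ i) ∧
    (∑ i ∈ Finset.range N, (1 : ℝ) / N =
        ∑ i ∈ Finset.range N, gibbsProb N E β₁ i) := by
  have hunif : ∀ i, gibbsProb N E 0 i = 1 / N := by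
    intro i
    unfold gibbsProb
    simp
  refine ⟨fun k hk => gibbs_partial_mono N hN E hE β₁ β₂ h2 k hk, ?_, ?_, ?_⟩
  · rw [gibbs_sum_one N hN E β₁, gibbs_sum_one N hN E β₂]
  · intro k hk
    have := gibbs_partial_mono N hN E hE 0 β₁ h1 k hk
    simpa [hunif] using this
  · have := gibbs_sum_one N hN E β₁
    rw [this]
    rw [Finset.sum_const, Finset.card_range]
    rw [nsmul_eq_mul, mul_one_div, div_self (by exact_mod_cast (by omega : N ≠ 0))]
end

section
/- Let p_1,...,p_N and q_1,...,q_N be positive reals with ∑ p_i = ∑ q_i = 1, both sorted decreasingly, such that the likelihood ratios p_i/q_i are non-increasing in i. Then p majorizes q. -/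
theorem likelihood_ratio_implies_majorization (N : ℕ) (p q : ℕ → ℝ)
    (hp : ∀ i < N, 0 < p i) (hq : ∀ i < N, 0 < q i)
    (hp1 : ∑ i ∈ Finset.range N, p i = 1) (hq1 : ∑ i ∈ Finset.range N, q i = 1)
    (hps : ∀ i j, i ≤ j → j < N → p j ≤ p i)
    (hqs : ∀ i j, i ≤ j → j < N → q j ≤ q i)
    (hratio : ∀ i, i + 1 < N → p (i + 1) / q (i + 1) ≤ p i / q i) :
    (∀ k ≤ N, ∑ i ∈ Finset.range k, q i ≤ ∑ i ∈ Finset.range k, p i) ∧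
    ∑ i ∈ Finset.range N, p i = ∑ i ∈ Finset.range N, q i := by
  have hratio' : ∀ i j, i ≤ j → j < N → p j / q j ≤ p i / q i := by
    intro i j hij hjN
    induction j with
    | zero => simp_all
    | succ m ih =>
      rcases Nat.eq_or_lt_of_le hij with h | h
      · rw [h]
      · exact (hratio m hjN).trans (ih (Nat.lt_succ_iff.mp h) (lt_trans (Nat.lt_succ_self m) hjN))
  refine ⟨?_, hp1.trans hq1.symm⟩
  intro k hk
  rcases Nat.eq_zero_or_pos k with rfl | hk0
  · simp
  rcases eq_or_lt_of_le hk with rfl | hkN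
  · rw [hp1, hq1]
  -- 0 < k < N
  have hk1N : k - 1 < N := lt_of_le_of_lt (Nat.sub_le k 1) hkN
  set c : ℝ := p (k - 1) / q (k - 1) with hc
  have hcpos : 0 < c := div_pos (hp _ hk1N) (hq _ hk1N)
  have hSq_nonneg : 0 ≤ ∑ i ∈ Finset.range k, q i :=
    Finset.sum_nonneg fun i hi => (hq i (lt_of_lt_of_le (Finset.mem_range.mp hi) hk)).le
  have hhead : c * ∑ i ∈ Finset.range k, q i ≤ ∑ i ∈ Finset.range k, p i := by
    rw [Finset.mul_sum]
    apply Finset.sum_le_sum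
    intro i hi
    have hiK : i < k := Finset.mem_range.mp hi
    have hiN : i < N := lt_of_lt_of_le hiK hk
    have h1 : c ≤ p i / q i := hratio' i (k - 1) (Nat.le_sub_one_of_lt hiK) hk1N
    calc c * q i ≤ (p i / q i) * q i := by
          exact mul_le_mul_of_nonneg_right h1 (hq i hiN).le
      _ = p i := div_mul_cancel₀ _ (hq i hiN).ne'
  have htail : ∑ i ∈ Finset.Ico k N, p i ≤ c * ∑ i ∈ Finset.Ico k N, q i := by
    rw [Finset.mul_sum]
    apply Finset.sum_le_sum
    intro i hi
    obtain ⟨hki, hiN⟩ := Finset.mem_Ico.mp hi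
    have h1 : p i / q i ≤ c := hratio' (k - 1) i (le_trans (Nat.sub_le k 1) hki) hiN
    calc p i = (p i / q i) * q i := (div_mul_cancel₀ _ (hq i hiN).ne').symm
      _ ≤ c * q i := mul_le_mul_of_nonneg_right h1 (hq i hiN).le
  have hsplit_p : ∑ i ∈ Finset.range k, p i + ∑ i ∈ Finset.Ico k N, p i = 1 := by
    rw [Finset.range_eq_Ico, Finset.sum_Ico_consecutive _ (Nat.zero_le k) hk,
      ← Finset.range_eq_Ico, hp1]
  have hsplit_q : ∑ i ∈ Finset.range k, q i + ∑ i ∈ Finset.Ico k N, q i = 1 := by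
    rw [Finset.range_eq_Ico, Finset.sum_Ico_consecutive _ (Nat.zero_le k) hk,
      ← Finset.range_eq_Ico, hq1]
  rcases le_or_gt 1 c with h1c | hc1
  · nlinarith [hhead]
  · have hTq_nonneg : 0 ≤ ∑ i ∈ Finset.Ico k N, q i :=
      Finset.sum_nonneg fun i hi => (hq i (Finset.mem_Ico.mp hi).2).le
    nlinarith [htail]
end
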